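/- Let S be an inverse semigroup and ρ a left congruence on S. Then the set InK(ρ) = { a ∈ S : a ρ aa⁻¹ } is a full inverse subsemigroup of S, i.e. it contains all idempotents of S, is closed under multiplication, and is closed under taking inverses. -/
import Mathlib


class InverseSemigroup (S : Type*) extends Semigroup S where
  inv : S → S
  mul_inv_mul : ∀ a : S, a * inv a * a = a
  inv_mul_inv : ∀ a : S, inv a * a * inv a = inv a
  inv_unique : ∀ a b : S, a * b * a = a → b * a * b = b → b = inv a

open InverseSemigroup

/-- `e` is an idempotent. -/
def IsIdem {S : Type*} [Mul S] (e : S) : Prop := e * e = e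

/-- `r` is a left congruence: an equivalence relation compatible with left multiplication. -/
def IsLeftCongruence {S : Type*} [Semigroup S] (r : S → S → Prop) : Prop :=
  Equivalence r ∧ ∀ a b c : S, r a b → r (c * a) (c * b)

/-- The inverse kernel of a relation: elements related to `a * a⁻¹`. -/
def InK {S : Type*} [InverseSemigroup S] (r : S → S → Prop) : Set S :=
  {a | r a (a * inv a)}

/-- The kernel: elements related to some idempotent. -/
def lker {S : Type*} [InverseSemigroup S] (r : S → S → Prop) : Set S :=
  {a | ∃ e, IsIdem e ∧ r a e}

/-- `τ` is a congruence on the semilattice of idempotents `E(S)`. -/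
def IsECong {S : Type*} [InverseSemigroup S] (τ : S → S → Prop) : Prop :=
  (∀ e f, τ e f → IsIdem e ∧ IsIdem f) ∧
  (∀ e, IsIdem e → τ e e) ∧
  (∀ e f, τ e f → τ f e) ∧
  (∀ e f g, τ e f → τ f g → τ e g) ∧
  (∀ e f g, IsIdem g → τ e f → τ (g * e) (g * f))

/-- The normaliser of a congruence on the idempotents. -/
def normaliser {S : Type*} [InverseSemigroup S] (τ : S → S → Prop) : Set S :=
  {a | ∀ e f, τ e f → τ (a * e * inv a) (a * f * inv a) ∧ τ (inv a * e * a) (inv a * f * a)}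

/-- `T` is a full inverse subsemigroup of `S`. -/
def IsFullInverseSub {S : Type*} [InverseSemigroup S] (T : Set S) : Prop :=
  (∀ e : S, IsIdem e → e ∈ T) ∧ (∀ a b, a ∈ T → b ∈ T → a * b ∈ T) ∧
  (∀ a, a ∈ T → inv a ∈ T)

section Aux
variable {S : Type*} [InverseSemigroup S]

lemma inv_inv' (a : S) : inv (inv a) = a := by
  have := InverseSemigroup.inv_unique (inv a) a (inv_mul_inv a) (mul_inv_mul a)
  exact this.symm

lemma inv_idem {e : S} (he : IsIdem e) : inv e = e := by
  have : e * e * e = e := by rw [he, he]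
  exact (InverseSemigroup.inv_unique e e this this).symm

lemma idem_mul_idem {e f : S} (he : IsIdem e) (hf : IsIdem f) : IsIdem (e * f) := by
  set x := inv (e * f) with hx
  have h1 : e * f * x * (e * f) = e * f := mul_inv_mul (e * f)
  have h2 : x * (e * f) * x = x := inv_mul_inv (e * f)
  have key : f * x * e = x := by
    apply InverseSemigroup.inv_unique
    · calc e * f * (f * x * e) * (e * f)
          = e * (f * f) * x * (e * e) * f := by simp only [mul_assoc]
        _ = e * f * x * (e * f) := by rw [he, hf]; simp only [mul_assoc]
        _ = e * f := h1
    · calc f * x * e * (e * f) * (f * x * e)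
          = f * (x * ((e * e) * (f * f)) * x) * e := by simp only [mul_assoc]
        _ = f * (x * (e * f) * x) * e := by rw [he, hf]
        _ = f * x * e := by rw [h2]
  have hxi : IsIdem x := by
    show x * x = x
    conv_lhs => rw [← key]
    calc f * x * e * (f * x * e)
        = f * (x * (e * f) * x) * e := by simp only [mul_assoc]
      _ = f * x * e := by rw [h2]
      _ = x := key
  have hex : e * f = x := by
    have h3 : x * (e * f) * x = x := h2
    have h4 : e * f * x * (e * f) = e * f := h1
    have := InverseSemigroup.inv_unique x (e * f) h3 h4
    rw [inv_idem hxi] at this; exact this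
  rw [hex]; exact hxi

lemma idem_comm {e f : S} (he : IsIdem e) (hf : IsIdem f) : e * f = f * e := by
  have hef := idem_mul_idem he hf
  have hfe := idem_mul_idem hf he
  have h1 : e * f * (f * e) * (e * f) = e * f := by
    calc e * f * (f * e) * (e * f)
        = e * (f * f) * (e * e) * f := by simp only [mul_assoc]
      _ = e * f * (e * f) := by rw [he, hf]; simp only [mul_assoc]
      _ = e * f := hef
  have h2 : f * e * (e * f) * (f * e) = f * e := by
    calc f * e * (e * f) * (f * e)
        = f * (e * e) * (f * f) * e := by simp only [mul_assoc]
      _ = f * e * (f * e) := by rw [he, hf]; simp only [mul_assoc]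
      _ = f * e := hfe
  have := InverseSemigroup.inv_unique (e * f) (f * e) h1 h2
  rw [this, inv_idem hef]

lemma mul_inv_idem (a : S) : IsIdem (a * inv a) := by
  show a * inv a * (a * inv a) = a * inv a
  calc a * inv a * (a * inv a) = a * inv a * a * inv a := by simp only [mul_assoc]
    _ = a * inv a := by rw [mul_inv_mul]

lemma inv_mul_idem (a : S) : IsIdem (inv a * a) := by
  show inv a * a * (inv a * a) = inv a * a
  calc inv a * a * (inv a * a) = inv a * a * inv a * a := by simp only [mul_assoc]
    _ = inv a * a := by rw [inv_mul_inv]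

lemma isg_inv_mul (a b : S) : inv (a * b) = inv b * inv a := by
  symm
  apply InverseSemigroup.inv_unique
  · calc a * b * (inv b * inv a) * (a * b)
        = a * (b * inv b * (inv a * a)) * b := by simp only [mul_assoc]
      _ = a * (inv a * a * (b * inv b)) * b := by
          rw [idem_comm (mul_inv_idem b) (inv_mul_idem a)]
      _ = a * inv a * a * (b * inv b * b) := by simp only [mul_assoc]
      _ = a * b := by rw [mul_inv_mul, mul_inv_mul]
  · calc inv b * inv a * (a * b) * (inv b * inv a)
        = inv b * (inv a * a * (b * inv b)) * inv a := by simp only [mul_assoc]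
      _ = inv b * (b * inv b * (inv a * a)) * inv a := by
          rw [idem_comm (inv_mul_idem a) (mul_inv_idem b)]
      _ = inv b * b * inv b * (inv a * a * inv a) := by simp only [mul_assoc]
      _ = inv b * inv a := by rw [inv_mul_inv, inv_mul_inv]

end Aux

theorem stmt0 {S : Type*} [InverseSemigroup S] (r : S → S → Prop)
    (hr : IsLeftCongruence r) :
    IsFullInverseSub (InK r) := by
  obtain ⟨heq, hl⟩ := hr
  refine ⟨?_, ?_, ?_⟩
  · intro e he
    show r e (e * inv e)
    rw [inv_idem he, he]
    exact heq.refl e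
  · intro a b ha hb
    have ha : r a (a * inv a) := ha
    have hb : r b (b * inv b) := hb
    show r (a * b) (a * b * inv (a * b))
    have h1 : r (a * b) (a * (b * inv b)) := hl _ _ a hb
    have h2 : r (a * b * inv b * inv a * a) (a * b * inv b * inv a * (a * inv a)) :=
      hl _ _ (a * b * inv b * inv a) ha
    have e1 : a * b * inv b * inv a * a = a * (b * inv b) := by
      calc a * b * inv b * inv a * a
          = a * (b * inv b * (inv a * a)) := by simp only [mul_assoc]
        _ = a * (inv a * a * (b * inv b)) := by
            rw [idem_comm (mul_inv_idem b) (inv_mul_idem a)]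
        _ = a * inv a * a * (b * inv b) := by simp only [mul_assoc]
        _ = a * (b * inv b) := by rw [mul_inv_mul]
    have e2 : a * b * inv b * inv a * (a * inv a) = a * b * inv (a * b) := by
      rw [isg_inv_mul]
      calc a * b * inv b * inv a * (a * inv a)
          = a * b * inv b * (inv a * a * inv a) := by simp only [mul_assoc]
        _ = a * b * inv b * inv a := by rw [inv_mul_inv]
        _ = a * b * (inv b * inv a) := by simp only [mul_assoc]
    rw [e1, e2] at h2
    exact heq.trans h1 h2
  · intro a ha
    have ha : r a (a * inv a) := ha
    show r (inv a) (inv a * inv (inv a))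
    rw [inv_inv']
    have h1 : r (inv a * a) (inv a * (a * inv a)) := hl _ _ (inv a) ha
    have : inv a * (a * inv a) = inv a := by
      rw [← mul_assoc, inv_mul_inv]
    rw [this] at h1
    exact heq.symm h1
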